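/- Let n ≥ 1 and z : Fin n → ℝ. Then H(softmaxτ(z, τ)) tends to log n as τ → ∞; and if z has a strict argmax (some i with z i > z j for all j ≠ i), then H(softmaxτ(z, τ)) tends to 0 as τ → 0⁺ (within (0, ∞)). -/

import Mathlib

open Real Set Filter

/-- Tempered softmax of logits `z` at temperature `τ`. -/
noncomputable def softmaxT {n : ℕ} (z : Fin n → ℝ) (τ : ℝ) (i : Fin n) : ℝ :=
  Real.exp (z i / τ) / ∑ j, Real.exp (z j / τ)

theorem entropy_of_softmaxT_limits
    (n : ℕ) (hn : 1 ≤ n) (z : Fin n → ℝ) :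
    Filter.Tendsto (fun τ : ℝ => -∑ i, softmaxT z τ i * Real.log (softmaxT z τ i))
      Filter.atTop (nhds (Real.log n)) ∧
    ((∃ i, ∀ j, j ≠ i → z j < z i) →
      Filter.Tendsto (fun τ : ℝ => -∑ i, softmaxT z τ i * Real.log (softmaxT z τ i))
        (nhdsWithin 0 (Set.Ioi 0)) (nhds 0)) := by
  have hne : Nonempty (Fin n) := Fin.pos_iff_nonempty.mp hn
  have hS : ∀ t : ℝ, 0 < ∑ j, Real.exp (z j * t) := fun t =>
    Finset.sum_pos (fun j _ => Real.exp_pos _) Finset.univ_nonempty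
  set g : ℝ → ℝ := fun t => ∑ i, Real.negMulLog (Real.exp (z i * t) / ∑ j, Real.exp (z j * t))
    with hg
  have key : ∀ τ : ℝ, (-∑ i, softmaxT z τ i * Real.log (softmaxT z τ i)) = g τ⁻¹ := by
    intro τ
    simp only [hg, softmaxT, Real.negMulLog, div_eq_mul_inv, neg_mul,
      ← Finset.sum_neg_distrib]
  have hgc : Continuous g := by
    apply continuous_finset_sum
    intro i _
    exact Real.continuous_negMulLog.comp
      ((Real.continuous_exp.comp (continuous_const.mul continuous_id)).div
        (continuous_finset_sum _ fun j _ =>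
          Real.continuous_exp.comp (continuous_const.mul continuous_id))
        (fun t => (hS t).ne'))
  constructor
  · -- τ → ∞
    have h0 : g 0 = Real.log n := by
      have hn0 : (n : ℝ) ≠ 0 := Nat.cast_ne_zero.mpr (by omega)
      simp only [hg, mul_zero, Real.exp_zero, Finset.sum_const, Finset.card_univ,
        Fintype.card_fin, nsmul_eq_mul, mul_one, Real.negMulLog, Real.log_div one_ne_zero hn0,
        Real.log_one]
      field_simp
      ring
    have : Filter.Tendsto g (nhds 0) (nhds (Real.log n)) := h0 ▸ hgc.tendsto 0
    have := this.comp tendsto_inv_atTop_zero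
    simpa only [Function.comp_def, key] using this
  · rintro ⟨i₀, hi₀⟩
    -- limit of g at atTop is 0
    have hq : ∀ j : Fin n, Filter.Tendsto
        (fun t => Real.exp (z j * t) / ∑ k, Real.exp (z k * t)) atTop
        (nhds (if j = i₀ then 1 else 0)) := by
      intro j
      have hr : ∀ k : Fin n, Filter.Tendsto (fun t => Real.exp ((z k - z i₀) * t)) atTop
          (nhds (if k = i₀ then 1 else 0)) := by
        intro k
        by_cases hk : k = i₀
        · simp [hk]
        · simp only [hk, if_false]
          have hlt : z k - z i₀ < 0 := sub_neg.mpr (hi₀ k hk)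
          have : Filter.Tendsto (fun t : ℝ => (z k - z i₀) * t) atTop atBot :=
            Filter.tendsto_id.const_mul_atTop_of_neg hlt
          exact Real.tendsto_exp_atBot.comp this
      have hD : Filter.Tendsto (fun t => ∑ k, Real.exp ((z k - z i₀) * t)) atTop (nhds 1) := by
        have := tendsto_finset_sum Finset.univ (fun k _ => hr k)
        simpa [Finset.sum_ite_eq'] using this
      have hEq : ∀ t : ℝ, Real.exp (z j * t) / ∑ k, Real.exp (z k * t)
          = Real.exp ((z j - z i₀) * t) / ∑ k, Real.exp ((z k - z i₀) * t) := by
        intro t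
        have h1 : ∀ k : Fin n, Real.exp ((z k - z i₀) * t)
            = Real.exp (z k * t) * Real.exp (-(z i₀ * t)) := by
          intro k; rw [← Real.exp_add]; ring_nf
        simp only [h1, ← Finset.sum_mul]
        rw [mul_div_mul_right _ _ (Real.exp_ne_zero _)]
      simp only [hEq]
      have := (hr j).div hD one_ne_zero
      simpa [Pi.div_def] using this
    have hglim : Filter.Tendsto g atTop (nhds 0) := by
      have := tendsto_finset_sum (Finset.univ : Finset (Fin n)) (fun j _ =>
        (Real.continuous_negMulLog.tendsto _).comp (hq j))
      have h2 : ∑ j : Fin n, Real.negMulLog (if j = i₀ then 1 else 0) = 0 := by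
        apply Finset.sum_eq_zero
        intro j _
        by_cases hj : j = i₀ <;> simp [hj, Real.negMulLog]
      rw [h2] at this
      exact this
    have hinv : Filter.Tendsto (fun τ : ℝ => τ⁻¹) (nhdsWithin 0 (Set.Ioi 0)) atTop :=
      tendsto_inv_nhdsGT_zero
    have := hglim.comp hinv
    simpa only [Function.comp_def, key] using this
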